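/- For a positive integer p and real ω, with l₁ = ⌊2^p ω⌋ and Δ = ω - l₁/2^p, if Δ ∈ (0, 1/2^p) then sin²(2^p π Δ)/(2^{2p} sin²(πΔ)) + sin²(2^p π(1/2^p - Δ))/(2^{2p} sin²(π(1/2^p - Δ))) > 8/π². -/

import Mathlib

open Real

lemma caseB (u : ℝ) (hu0 : 0 ≤ u) (hu2 : u ≤ 0.29) :
    8 * ((1/2-u)^2 * (1-(1/2-u))^2) ≤ Real.sin (π*(1/2-u))^2 * ((1/2-u)^2 + (1-(1/2-u))^2) := by
  have hπ2 := Real.pi_lt_d6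
  have hπ1 := Real.pi_gt_d6
  have hcos : Real.sin (π*(1/2-u)) = Real.cos (π*u) := by
    rw [show π*(1/2-u) = π/2 - π*u by ring, Real.sin_pi_div_two_sub]
  have hc : 1 - (π*u)^2/2 ≤ Real.cos (π*u) := Real.one_sub_sq_div_two_le_cos
  have hp2 : π^2 < 9.86961 := by nlinarith
  have hc2 : (1:ℝ) - 4.93481*u^2 ≤ 1 - (π*u)^2/2 := by
    nlinarith [mul_nonneg (by linarith : (0:ℝ) ≤ 9.86962 - π^2) (sq_nonneg u)]
  have hc0 : (0:ℝ) ≤ 1 - 4.93481*u^2 := by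
    nlinarith [mul_nonneg (sub_nonneg.2 hu2) hu0]
  have hsq : ((1:ℝ) - 4.93481*u^2)^2 ≤ Real.cos (π*u)^2 :=
    pow_le_pow_left₀ hc0 (by linarith) 2
  have hpoly : ((1:ℝ) - 4*u^2)^2 ≤ (1 - 4.93481*u^2)^2 * (1 + 4*u^2) := by
    nlinarith [sq_nonneg u, sq_nonneg (u^2 - 0.0841), mul_nonneg hu0 hu0, sq_nonneg (u*(u-0.29)), mul_nonneg (mul_nonneg hu0 hu0) (mul_nonneg hu0 hu0), mul_nonneg (sub_nonneg.2 hu2) hu0]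
  rw [hcos]
  calc 8 * ((1/2-u)^2 * (1-(1/2-u))^2) = (1-4*u^2)^2 / 2 := by ring
    _ ≤ (1 - 4.93481*u^2)^2 * (1 + 4*u^2) / 2 := by linarith
    _ = (1 - 4.93481*u^2)^2 * ((1 + 4*u^2)/2) := by ring
    _ ≤ Real.cos (π*u)^2 * ((1 + 4*u^2)/2) :=
        mul_le_mul_of_nonneg_right hsq (by positivity)
    _ = Real.cos (π*u)^2 * ((1/2-u)^2 + (1-(1/2-u))^2) := by ring

lemma key_half (t : ℝ) (h0 : 0 < t) (h2 : t ≤ 1/2) :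
    8 * (t^2 * (1-t)^2) ≤ Real.sin (π*t)^2 * (t^2 + (1-t)^2) := by
  rcases le_or_gt t 0.21 with hA | hB
  · have hπ1 := Real.pi_gt_d6
    have hπ2 := Real.pi_lt_d6
    have hp2 : π^2 < 9.86961 := by nlinarith
    have hp3 : π^3 < 31.0068 := by
      nlinarith [mul_lt_mul_of_pos_left hp2 Real.pi_pos, Real.pi_pos]
    have hx0 : 0 < π * t := by positivity
    have hx1 : π * t ≤ 1 := by nlinarith
    have hs : π*t - (π*t)^3/4 < Real.sin (π*t) := by
      have := Real.sin_gt_sub_cube hx0; linarith [pow_pos hx0 3]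
    have ht3 : 0 ≤ t^3 := by positivity
    have hM : (3.141592 : ℝ) * t - 7.7517 * t^3 ≤ π*t - (π*t)^3/4 := by
      nlinarith [mul_nonneg (by linarith : (0:ℝ) ≤ π - 3.141592) h0.le,
        mul_nonneg (by linarith : (0:ℝ) ≤ 31.0068 - π^3) ht3]
    have hM0 : (0:ℝ) ≤ 3.141592 * t - 7.7517 * t^3 := by
      nlinarith [mul_nonneg h0.le (by nlinarith : (0:ℝ) ≤ 3.141592 - 7.7517*t^2)]
    have hsin : (3.141592 : ℝ) * t - 7.7517 * t^3 ≤ Real.sin (π*t) := by linarith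
    have hsq : ((3.141592 : ℝ) * t - 7.7517 * t^3)^2 ≤ Real.sin (π*t)^2 :=
      pow_le_pow_left₀ hM0 hsin 2
    have hpoly : 8 * ((1-t)^2) ≤ (3.141592 - 7.7517*t^2)^2 * (t^2 + (1-t)^2) := by
      nlinarith [sq_nonneg t, sq_nonneg (t - 0.21), sq_nonneg (t*(t-0.21)), mul_pos h0 h0, sq_nonneg (t^2 - 0.0441), mul_nonneg (sub_nonneg.2 hA) h0.le]
    calc 8 * (t^2 * (1-t)^2) = t^2 * (8 * ((1-t)^2)) := by ring
      _ ≤ t^2 * ((3.141592 - 7.7517*t^2)^2 * (t^2 + (1-t)^2)) :=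
          mul_le_mul_of_nonneg_left hpoly (sq_nonneg t)
      _ = ((3.141592 : ℝ) * t - 7.7517 * t^3)^2 * (t^2 + (1-t)^2) := by ring
      _ ≤ Real.sin (π*t)^2 * (t^2 + (1-t)^2) :=
          mul_le_mul_of_nonneg_right hsq (by positivity)
  · have := caseB (1/2 - t) (by linarith) (by linarith)
    have e : (1:ℝ)/2 - (1/2 - t) = t := by ring
    rw [e] at this
    exact this

lemma key (t : ℝ) (h0 : 0 < t) (h1 : t < 1) :
    8 * (t^2 * (1-t)^2) ≤ Real.sin (π*t)^2 * (t^2 + (1-t)^2) := by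
  rcases le_or_gt t (1/2) with h | h
  · exact key_half t h0 h
  · have := key_half (1-t) (by linarith) (by linarith)
    rw [show π*(1-t) = π - π*t by ring, Real.sin_pi_sub] at this
    calc 8 * (t^2 * (1-t)^2) = 8 * ((1-t)^2 * (1-(1-t))^2) := by ring
      _ ≤ Real.sin (π*t)^2 * ((1-t)^2 + (1-(1-t))^2) := this
      _ = Real.sin (π*t)^2 * (t^2 + (1-t)^2) := by ring
lemma sum_bound (t d1 d2 : ℝ) (ht0 : 0 < t) (ht1 : t < 1)
    (hp1 : 0 < d1) (hp2 : 0 < d2)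
    (hd1 : d1 < π ^ 2 * t ^ 2) (hd2 : d2 < π ^ 2 * (1 - t) ^ 2) :
    8 / π ^ 2 < Real.sin (π * t) ^ 2 / d1 + Real.sin (π * t) ^ 2 / d2 := by
  have hπ := Real.pi_pos
  have hsint : 0 < Real.sin (π * t) := by
    apply Real.sin_pos_of_pos_of_lt_pi (by positivity)
    nlinarith
  have hA : 0 < Real.sin (π * t) ^ 2 := by positivity
  have hb1 : Real.sin (π * t) ^ 2 / (π ^ 2 * t ^ 2) < Real.sin (π * t) ^ 2 / d1 :=
    div_lt_div_of_pos_left hA hp1 hd1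
  have hb2 : Real.sin (π * t) ^ 2 / (π ^ 2 * (1 - t) ^ 2) < Real.sin (π * t) ^ 2 / d2 :=
    div_lt_div_of_pos_left hA hp2 hd2
  have hkey := key t ht0 ht1
  have hfin : 8 / π ^ 2 ≤ Real.sin (π * t) ^ 2 / (π ^ 2 * t ^ 2) +
      Real.sin (π * t) ^ 2 / (π ^ 2 * (1 - t) ^ 2) := by
    have pb : (0:ℝ) < π ^ 2 * t ^ 2 := by positivity
    have h1t : (0:ℝ) < 1 - t := by linarith
    have pc : (0:ℝ) < π ^ 2 * (1 - t) ^ 2 := by positivity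
    rw [div_add_div _ _ pb.ne' pc.ne', div_le_div_iff₀ (by positivity) (mul_pos pb pc)]
    nlinarith [mul_le_mul_of_nonneg_left hkey (by positivity : (0:ℝ) ≤ π ^ 4)]
  calc 8 / π ^ 2 ≤ _ := hfin
    _ < _ := add_lt_add hb1 hb2

theorem quantum_counting_bound (p : ℕ) (hp : 0 < p) (ω : ℝ) (l₁ : ℤ)
    (hl : l₁ = ⌊(2 : ℝ) ^ p * ω⌋) (Δ : ℝ) (hΔ : Δ = ω - (l₁ : ℝ) / 2 ^ p)
    (h₀ : 0 < Δ) (h₁ : Δ < 1 / 2 ^ p) :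
    Real.sin ((2 : ℝ) ^ p * π * Δ) ^ 2 / (2 ^ (2 * p) * Real.sin (π * Δ) ^ 2) +
      Real.sin ((2 : ℝ) ^ p * π * (1 / 2 ^ p - Δ)) ^ 2 /
        (2 ^ (2 * p) * Real.sin (π * (1 / 2 ^ p - Δ)) ^ 2) > 8 / π ^ 2 := by
  have hπ := Real.pi_pos
  have hN : (0:ℝ) < 2 ^ p := by positivity
  have hN1 : (1:ℝ) ≤ 2 ^ p := one_le_pow₀ (by norm_num)
  have ht0 : 0 < 2 ^ p * Δ := by positivity
  have ht1 : 2 ^ p * Δ < 1 := by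
    have := mul_lt_mul_of_pos_left h₁ hN
    rwa [mul_one_div, div_self hN.ne'] at this
  have hΔ1 : Δ < 1 := lt_of_lt_of_le h₁ (by rw [div_le_one hN]; exact hN1)
  have hδ0 : 0 < 1 / (2:ℝ) ^ p - Δ := by linarith
  have hδ1 : 1 / (2:ℝ) ^ p - Δ < 1 := by
    have : 1 / (2:ℝ) ^ p ≤ 1 := by rw [div_le_one hN]; exact hN1
    linarith
  have hNδ : (2:ℝ) ^ p * (1 / 2 ^ p - Δ) = 1 - 2 ^ p * Δ := by
    field_simp
  have e1 : (2:ℝ) ^ p * π * Δ = π * (2 ^ p * Δ) := by ring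
  have e2 : (2:ℝ) ^ p * π * (1 / 2 ^ p - Δ) = π - π * (2 ^ p * Δ) := by
    have h' : (2:ℝ) ^ p * π * (1 / 2 ^ p - Δ) = π * ((2:ℝ) ^ p * (1 / 2 ^ p - Δ)) := by ring
    rw [h', hNδ]; ring
  rw [e1, e2, Real.sin_pi_sub]
  have hpow : (2:ℝ) ^ (2 * p) = ((2:ℝ) ^ p) ^ 2 := by
    rw [two_mul, pow_add]; ring
  have hs1 : 0 < Real.sin (π * Δ) := by
    apply Real.sin_pos_of_pos_of_lt_pi (by positivity)
    nlinarith
  have hlt1 : Real.sin (π * Δ) < π * Δ := Real.sin_lt (by positivity)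
  have hd1 : (2:ℝ) ^ (2 * p) * Real.sin (π * Δ) ^ 2 < π ^ 2 * (2 ^ p * Δ) ^ 2 := by
    have h := pow_lt_pow_left₀ hlt1 hs1.le (by norm_num : 2 ≠ 0)
    calc (2:ℝ) ^ (2 * p) * Real.sin (π * Δ) ^ 2
        < (2:ℝ) ^ (2 * p) * (π * Δ) ^ 2 := by
          exact mul_lt_mul_of_pos_left h (by positivity)
      _ = π ^ 2 * (2 ^ p * Δ) ^ 2 := by rw [hpow]; ring
  have hs2 : 0 < Real.sin (π * (1 / 2 ^ p - Δ)) := by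
    apply Real.sin_pos_of_pos_of_lt_pi (by positivity)
    nlinarith
  have hlt2 : Real.sin (π * (1 / 2 ^ p - Δ)) < π * (1 / 2 ^ p - Δ) :=
    Real.sin_lt (by positivity)
  have hd2 : (2:ℝ) ^ (2 * p) * Real.sin (π * (1 / 2 ^ p - Δ)) ^ 2
      < π ^ 2 * (1 - 2 ^ p * Δ) ^ 2 := by
    have h := pow_lt_pow_left₀ hlt2 hs2.le (by norm_num : 2 ≠ 0)
    calc (2:ℝ) ^ (2 * p) * Real.sin (π * (1 / 2 ^ p - Δ)) ^ 2
        < (2:ℝ) ^ (2 * p) * (π * (1 / 2 ^ p - Δ)) ^ 2 := by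
          exact mul_lt_mul_of_pos_left h (by positivity)
      _ = π ^ 2 * ((2:ℝ) ^ p * (1 / 2 ^ p - Δ)) ^ 2 := by rw [hpow]; ring
      _ = π ^ 2 * (1 - 2 ^ p * Δ) ^ 2 := by rw [hNδ]
  exact sum_bound (2 ^ p * Δ) _ _ ht0 ht1 (by positivity) (by positivity) hd1 hd2
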